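/- The matching distance d_{ℕ[X]} on the space of finite multisets of a pointed metric space (X,e) is well defined (independent of padding with copies of the basepoint) and is a metric. -/

import Mathlib

open Multiset Metric

variable {X : Type*}

/-- Matching distance on finite multisets of a pointed metric space `(X, e)`:
pad both sides with copies of the basepoint and take the infimum over all matchings. -/
noncomputable def dN [MetricSpace X] (e : X) (s t : Multiset X) : ℝ :=
  sInf { c : ℝ | ∃ (l₁ l₂ : List X) (k j : ℕ),
    l₁.length = l₂.length ∧
    (↑l₁ : Multiset X) = s + Multiset.replicate k e ∧
    (↑l₂ : Multiset X) = t + Multiset.replicate j e ∧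
    c = (List.zipWith dist l₁ l₂).sum }

namespace DNAux

set_option linter.unusedSectionVars false

variable [MetricSpace X]

/-- The defining set of matching costs. -/
def Sset (e : X) (s t : Multiset X) : Set ℝ :=
  { c : ℝ | ∃ (l₁ l₂ : List X) (k j : ℕ),
    l₁.length = l₂.length ∧
    (↑l₁ : Multiset X) = s + Multiset.replicate k e ∧
    (↑l₂ : Multiset X) = t + Multiset.replicate j e ∧
    c = (List.zipWith dist l₁ l₂).sum }

lemma dN_eq (e : X) (s t : Multiset X) : dN e s t = sInf (Sset e s t) := rfl

lemma coe_pad (l : List X) (n : ℕ) (e : X) :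
    ((l ++ List.replicate n e : List X) : Multiset X) = ↑l + Multiset.replicate n e := rfl

lemma zipWith_dist_eq_map (l₁ l₂ : List X) :
    List.zipWith dist l₁ l₂ = (l₁.zip l₂).map fun p => dist p.1 p.2 := by
  induction l₁ generalizing l₂ with
  | nil => simp
  | cons a l ih => cases l₂ <;> simp [ih]

lemma zip_sum_nonneg (l₁ l₂ : List X) : 0 ≤ (List.zipWith dist l₁ l₂).sum := by
  apply List.sum_nonneg
  intro x hx
  rw [zipWith_dist_eq_map] at hx
  obtain ⟨p, _, rfl⟩ := List.mem_map.mp hx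
  exact dist_nonneg

lemma zip_sum_comm (l₁ l₂ : List X) :
    (List.zipWith dist l₁ l₂).sum = (List.zipWith dist l₂ l₁).sum := by
  induction l₁ generalizing l₂ with
  | nil => cases l₂ <;> simp
  | cons a l ih => cases l₂ <;> simp [dist_comm, ih]

lemma rep_zip_sum (n : ℕ) (e : X) :
    (List.zipWith dist (List.replicate n e) (List.replicate n e)).sum = 0 := by
  induction n with
  | zero => simp
  | succ n ih => simp [List.replicate_succ, ih]

lemma self_zip_sum (l : List X) : (List.zipWith dist l l).sum = 0 := by
  induction l with
  | nil => simp
  | cons a l ih => simp [ih]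

lemma pad_sum (l₁ l₂ : List X) (h : l₁.length = l₂.length) (n : ℕ) (e : X) :
    (List.zipWith dist (l₁ ++ List.replicate n e) (l₂ ++ List.replicate n e)).sum
      = (List.zipWith dist l₁ l₂).sum := by
  rw [List.zipWith_append h, List.sum_append, rep_zip_sum, add_zero]

lemma sum_tri : ∀ (l₁ l₂ l₃ : List X), l₁.length = l₂.length → l₂.length = l₃.length →
    (List.zipWith dist l₁ l₃).sum ≤
      (List.zipWith dist l₁ l₂).sum + (List.zipWith dist l₂ l₃).sum
  | [], [], [], _, _ => by simp
  | [], b :: l₂, _, h, _ => by simp at h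
  | a :: l₁, [], _, h, _ => by simp at h
  | a :: l₁, b :: l₂, [], _, h => by simp at h
  | a :: l₁, b :: l₂, c :: l₃, h12, h23 => by
    simp only [List.zipWith_cons_cons, List.sum_cons]
    have ht := dist_triangle a b c
    have ih := sum_tri l₁ l₂ l₃ (by simpa using h12) (by simpa using h23)
    linarith

/-- Transport a matching along a permutation of its left column. -/
lemma perm_transport {b c : List X} (h : b.Perm c) :
    ∀ d : List X, c.length = d.length → ∃ d', d'.Perm d ∧
      (List.zipWith dist b d').sum = (List.zipWith dist c d).sum := by
  induction h with
  | nil => exact fun d _ => ⟨d, List.Perm.refl _, rfl⟩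
  | cons x h ih =>
    intro d hd
    cases d with
    | nil => simp at hd
    | cons y d =>
      obtain ⟨d', hp, hs⟩ := ih d (by simpa using hd)
      exact ⟨y :: d', hp.cons y, by simp [hs]⟩
  | swap x y l =>
    intro d hd
    match d with
    | [] => simp at hd
    | [d₁] => simp at hd
    | d₁ :: d₂ :: d =>
      refine ⟨d₂ :: d₁ :: d, List.Perm.swap _ _ _, ?_⟩
      simp only [List.zipWith_cons_cons, List.sum_cons]
      ring
  | trans h₁ h₂ ih₁ ih₂ =>
    intro d hd
    obtain ⟨d', hp, hs⟩ := ih₂ d hd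
    obtain ⟨d'', hp', hs'⟩ := ih₁ d' (by rw [h₂.length_eq, hd, hp.length_eq])
    exact ⟨d'', hp'.trans hp, hs'.trans hs⟩

lemma eq_of_zip_eq : ∀ (l₁ l₂ : List X), l₁.length = l₂.length →
    (∀ a b : X, (a, b) ∈ l₁.zip l₂ → a = b) → l₁ = l₂
  | [], [], _, _ => rfl
  | [], b :: l₂, h, _ => by simp at h
  | a :: l₁, [], h, _ => by simp at h
  | a :: l₁, b :: l₂, h, hz => by
    have h1 : a = b := hz a b (by simp)
    have h2 := eq_of_zip_eq l₁ l₂ (by simpa using h) fun x y hxy => hz x y (by simp [hxy])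
    rw [h1, h2]

lemma Sset_nonempty (e : X) (s t : Multiset X) : (Sset e s t).Nonempty := by
  refine ⟨_, s.toList ++ List.replicate (Multiset.card t) e,
    t.toList ++ List.replicate (Multiset.card s) e, Multiset.card t, Multiset.card s,
    ?_, ?_, ?_, rfl⟩
  · simp [add_comm]
  · rw [coe_pad, Multiset.coe_toList]
  · rw [coe_pad, Multiset.coe_toList]

lemma Sset_nonneg (e : X) (s t : Multiset X) : ∀ c ∈ Sset e s t, 0 ≤ c := by
  rintro c ⟨l₁, l₂, k, j, _, _, _, rfl⟩
  exact zip_sum_nonneg l₁ l₂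

lemma Sset_bddBelow (e : X) (s t : Multiset X) : BddBelow (Sset e s t) :=
  ⟨0, fun c hc => Sset_nonneg e s t c hc⟩

lemma dN_nonneg (e : X) (s t : Multiset X) : 0 ≤ dN e s t :=
  Real.sInf_nonneg (Sset_nonneg e s t)

lemma Sset_comm (e : X) (s t : Multiset X) : Sset e s t = Sset e t s := by
  ext c
  constructor <;> rintro ⟨l₁, l₂, k, j, hl, h1, h2, rfl⟩ <;>
    exact ⟨l₂, l₁, j, k, hl.symm, h2, h1, (zip_sum_comm _ _).symm⟩

lemma dN_comm (e : X) (s t : Multiset X) : dN e s t = dN e t s := by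
  rw [dN_eq, dN_eq, Sset_comm]

lemma pad_assoc (s : Multiset X) (e : X) (k : ℕ) :
    (s + {e}) + Multiset.replicate k e = s + Multiset.replicate (k + 1) e := by
  rw [add_assoc, Multiset.singleton_add, ← Multiset.replicate_succ]

lemma Sset_pad_left (e : X) (s t : Multiset X) : Sset e (s + {e}) t = Sset e s t := by
  ext c
  constructor
  · rintro ⟨l₁, l₂, k, j, hl, h1, h2, rfl⟩
    exact ⟨l₁, l₂, k + 1, j, hl, by rw [h1, pad_assoc], h2, rfl⟩
  · rintro ⟨l₁, l₂, k, j, hl, h1, h2, rfl⟩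
    refine ⟨l₁ ++ [e], l₂ ++ [e], k, j + 1, by simp [hl], ?_, ?_, ?_⟩
    · have he : ([e] : List X) = List.replicate 1 e := rfl
      rw [he, coe_pad, h1, show Multiset.replicate 1 e = ({e} : Multiset X) from rfl,
        add_right_comm]
    · have he : ([e] : List X) = List.replicate 1 e := rfl
      rw [he, coe_pad, h2, add_assoc, ← Multiset.replicate_add]
    · have he : ([e] : List X) = List.replicate 1 e := rfl
      rw [he, pad_sum l₁ l₂ hl 1 e]

lemma dN_pad_left (e : X) (s t : Multiset X) : dN e (s + {e}) t = dN e s t := by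
  rw [dN_eq, dN_eq, Sset_pad_left]

lemma dN_triangle (e : X) (s t u : Multiset X) :
    dN e s u ≤ dN e s t + dN e t u := by
  refine le_of_forall_pos_le_add fun ε hε => ?_
  obtain ⟨a, ha, halt⟩ := exists_lt_of_csInf_lt (Sset_nonempty e s t)
    (show sInf (Sset e s t) < dN e s t + ε / 2 by rw [← dN_eq]; linarith)
  obtain ⟨b, hb, hblt⟩ := exists_lt_of_csInf_lt (Sset_nonempty e t u)
    (show sInf (Sset e t u) < dN e t u + ε / 2 by rw [← dN_eq]; linarith)
  obtain ⟨l₁, l₂, k, j, hl, h1, h2, rfl⟩ := ha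
  obtain ⟨m₂, m₃, k', j', hm, h2', h3, rfl⟩ := hb
  have hL₂M₂ : ((l₂ ++ List.replicate k' e : List X) : Multiset X)
      = ((m₂ ++ List.replicate j e : List X) : Multiset X) := by
    rw [coe_pad, coe_pad, h2, h2', add_assoc, add_assoc, ← Multiset.replicate_add,
      ← Multiset.replicate_add, add_comm j k']
  have hperm : (l₂ ++ List.replicate k' e).Perm (m₂ ++ List.replicate j e) :=
    Multiset.coe_eq_coe.mp hL₂M₂
  have hlenM : (m₂ ++ List.replicate j e).length = (m₃ ++ List.replicate j e).length := by
    simp [hm]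
  obtain ⟨M₃', hp3, hs3⟩ := perm_transport hperm (m₃ ++ List.replicate j e) hlenM
  have hlenL : (l₁ ++ List.replicate k' e).length = (l₂ ++ List.replicate k' e).length := by
    simp [hl]
  have hlen2 : (l₂ ++ List.replicate k' e).length = M₃'.length := by
    rw [hperm.length_eq, hlenM, ← hp3.length_eq]
  have hsum1 := pad_sum l₁ l₂ hl k' e
  have hsum2 := pad_sum m₂ m₃ hm j e
  have htri := sum_tri (l₁ ++ List.replicate k' e) (l₂ ++ List.replicate k' e) M₃'
    hlenL hlen2
  have hmem : (List.zipWith dist (l₁ ++ List.replicate k' e) M₃').sum ∈ Sset e s u := by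
    refine ⟨l₁ ++ List.replicate k' e, M₃', k + k', j' + j, hlenL.trans hlen2, ?_, ?_, rfl⟩
    · rw [coe_pad, h1, add_assoc, ← Multiset.replicate_add]
    · rw [Multiset.coe_eq_coe.mpr hp3, coe_pad, h3, add_assoc, ← Multiset.replicate_add]
  have hle : dN e s u ≤ (List.zipWith dist (l₁ ++ List.replicate k' e) M₃').sum :=
    csInf_le (Sset_bddBelow e s u) hmem
  rw [hs3, hsum2] at htri
  rw [hsum1] at htri
  linarith

lemma dN_zero_of_eq (e : X) (s t : Multiset X) (k j : ℕ)
    (h : s + Multiset.replicate k e = t + Multiset.replicate j e) : dN e s t = 0 := by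
  have hmem : (0 : ℝ) ∈ Sset e s t := by
    exact ⟨(s + Multiset.replicate k e).toList, (s + Multiset.replicate k e).toList, k, j,
      rfl, by simp, by simp [h], (self_zip_sum _).symm⟩
  have h1 := csInf_le (Sset_bddBelow e s t) hmem
  have h0 := dN_nonneg e s t
  rw [dN_eq] at h0 ⊢
  linarith

lemma eq_of_dN_zero (e : X) (s t : Multiset X) (h : dN e s t = 0) :
    ∃ k j : ℕ, s + Multiset.replicate k e = t + Multiset.replicate j e := by
  classical
  set A : Finset X := insert e s.toFinset with hA
  set B : Finset X := insert e t.toFinset with hB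
  set D : Finset ℝ := ((A ×ˢ B).image fun p => dist p.1 p.2).filter (0 < ·) with hD
  by_cases hDne : D.Nonempty
  · -- positive minimal distance
    have hδpos : 0 < D.min' hDne := (Finset.mem_filter.mp (D.min'_mem hDne)).2
    obtain ⟨c, hc, hclt⟩ := exists_lt_of_csInf_lt (Sset_nonempty e s t)
      (show sInf (Sset e s t) < D.min' hDne by rw [← dN_eq, h]; exact hδpos)
    obtain ⟨l₁, l₂, k, j, hl, h1, h2, rfl⟩ := hc
    have hpairs : ∀ a b : X, (a, b) ∈ l₁.zip l₂ → a = b := by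
      intro a b hab
      have haA : a ∈ A := by
        have : a ∈ l₁ := (List.of_mem_zip hab).1
        have : a ∈ (↑l₁ : Multiset X) := by simpa using this
        rw [h1, Multiset.mem_add] at this
        rcases this with h' | h'
        · exact Finset.mem_insert_of_mem (Multiset.mem_toFinset.mpr h')
        · exact Finset.mem_insert.mpr (Or.inl (Multiset.eq_of_mem_replicate h'))
      have hbB : b ∈ B := by
        have : b ∈ l₂ := (List.of_mem_zip hab).2
        have : b ∈ (↑l₂ : Multiset X) := by simpa using this
        rw [h2, Multiset.mem_add] at this
        rcases this with h' | h'
        · exact Finset.mem_insert_of_mem (Multiset.mem_toFinset.mpr h')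
        · exact Finset.mem_insert.mpr (Or.inl (Multiset.eq_of_mem_replicate h'))
      have hmem' : dist a b ∈ List.zipWith dist l₁ l₂ := by
        rw [zipWith_dist_eq_map]
        exact List.mem_map.mpr ⟨(a, b), hab, rfl⟩
      have hnonneg : ∀ x ∈ List.zipWith dist l₁ l₂, (0:ℝ) ≤ x := by
        intro x hx
        rw [zipWith_dist_eq_map] at hx
        obtain ⟨p, _, rfl⟩ := List.mem_map.mp hx
        exact dist_nonneg
      have hltδ : dist a b < D.min' hDne :=
        lt_of_le_of_lt (List.single_le_sum hnonneg _ hmem') hclt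
      by_contra hne
      have hdpos : 0 < dist a b := dist_pos.mpr hne
      have hinD : dist a b ∈ D := Finset.mem_filter.mpr
        ⟨Finset.mem_image.mpr ⟨(a, b), Finset.mem_product.mpr ⟨haA, hbB⟩, rfl⟩, hdpos⟩
      exact absurd hltδ (not_lt.mpr (D.min'_le _ hinD))
    have : l₁ = l₂ := eq_of_zip_eq l₁ l₂ hl hpairs
    exact ⟨k, j, by rw [← h1, ← h2, this]⟩
  · -- no positive distances among points of s, t, e: everything equals e
    have hall : ∀ a ∈ A, ∀ b ∈ B, a = b := by
      intro a ha b hb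
      by_contra hne
      exact hDne ⟨dist a b, Finset.mem_filter.mpr
        ⟨Finset.mem_image.mpr ⟨(a, b), Finset.mem_product.mpr ⟨ha, hb⟩, rfl⟩,
          dist_pos.mpr hne⟩⟩
    have hs : s = Multiset.replicate (Multiset.card s) e := by
      rw [Multiset.eq_replicate_card]
      intro x hx
      exact hall x (Finset.mem_insert_of_mem (Multiset.mem_toFinset.mpr hx)) e
        (Finset.mem_insert_self _ _)
    have ht : t = Multiset.replicate (Multiset.card t) e := by
      rw [Multiset.eq_replicate_card]
      intro x hx
      exact (hall e (Finset.mem_insert_self _ _) x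
        (Finset.mem_insert_of_mem (Multiset.mem_toFinset.mpr hx))).symm
    refine ⟨Multiset.card t, Multiset.card s, ?_⟩
    rw [hs, ht, ← Multiset.replicate_add, ← Multiset.replicate_add]
    simp [Multiset.card_replicate, add_comm]

end DNAux

/-- The matching distance `d_{ℕ[X]}` is well defined (unchanged under padding either
argument with a copy of the basepoint) and is a metric on the space of finite multisets
modulo basepoint copies: nonnegative, symmetric, satisfies the triangle inequality, and
vanishes exactly when the two multisets agree up to adding copies of `e`. -/
theorem dN_well_defined_and_metric [MetricSpace X] (e : X) :
    (∀ s t : Multiset X, dN e (s + {e}) t = dN e s t) ∧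
    (∀ s t : Multiset X, dN e s (t + {e}) = dN e s t) ∧
    (∀ s t : Multiset X, 0 ≤ dN e s t) ∧
    (∀ s t : Multiset X, dN e s t = dN e t s) ∧
    (∀ s t u : Multiset X, dN e s u ≤ dN e s t + dN e t u) ∧
    (∀ s t : Multiset X, dN e s t = 0 ↔
      ∃ k j : ℕ, s + Multiset.replicate k e = t + Multiset.replicate j e) := by
  refine ⟨DNAux.dN_pad_left e, ?_, DNAux.dN_nonneg e, DNAux.dN_comm e,
    DNAux.dN_triangle e, ?_⟩
  · intro s t
    rw [DNAux.dN_comm e s (t + {e}), DNAux.dN_pad_left e t s, DNAux.dN_comm]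
  · intro s t
    exact ⟨DNAux.eq_of_dN_zero e s t, fun ⟨k, j, hkj⟩ => DNAux.dN_zero_of_eq e s t k j hkj⟩
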